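/- arXiv:1711.09631 — 2 statements merged into one kernel-verified Lean document; each statement's English description precedes it below -/
import Mathlib

section
/- Let N ≥ 1, m ≥ 0, and let a = (a_1,…,a_N) be an N-tuple of nonnegative integers summing to m with max_j a_j − min_j a_j ≤ 1. Then for every N-tuple b of nonnegative integers summing to m and every 1 ≤ k ≤ N, one has r_k(b) ≤ r_k(a), where r_k(c) denotes the minimum of c_{i_1}+⋯+c_{i_k} over all subsets {i_1 < ⋯ < i_k} of {1,…,N} of size k. -/
/-- `rmin N c k` is the minimum of the sums of `k` distinct entries of `c`. -/
noncomputable def rmin (N : ℕ) (c : Fin N → ℕ) (k : ℕ) : ℕ :=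
  sInf {x | ∃ s : Finset (Fin N), s.card = k ∧ ∑ i ∈ s, c i = x}

/-- A tuple whose entries pairwise differ by at most one is maximal for the order
given by comparing all the `r_k`. -/
theorem stmt_2 (N m : ℕ) (hN : 1 ≤ N) (a : Fin N → ℕ)
    (ha : ∑ i, a i = m) (hamax : ∀ i j, a i ≤ a j + 1) :
    ∀ b : Fin N → ℕ, (∑ i, b i = m) →
      ∀ k, 1 ≤ k → k ≤ N → rmin N b k ≤ rmin N a k := by
  intro b hb k hk1 hkN
  obtain ⟨j0, -, hj0⟩ := Finset.exists_min_image Finset.univ a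
    ⟨⟨0, by omega⟩, Finset.mem_univ _⟩
  set q := a j0 with hq
  have hle : ∀ i, a i ≤ q + 1 := fun i => hamax i j0
  have hge : ∀ i, q ≤ a i := fun i => hj0 i (Finset.mem_univ i)
  have hne : ∀ c : Fin N → ℕ,
      ({x | ∃ s : Finset (Fin N), s.card = k ∧ ∑ i ∈ s, c i = x}).Nonempty := by
    intro c
    obtain ⟨s, -, hs⟩ := Finset.exists_subset_card_eq (s := (Finset.univ : Finset (Fin N))) (n := k)
      (by simpa using hkN)
    exact ⟨_, s, hs, rfl⟩
  obtain ⟨S, hScard, hSsum⟩ := Nat.sInf_mem (hne a)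
  obtain ⟨T, hTcard, hTsum⟩ := Nat.sInf_mem (hne b)
  by_contra hcon
  push_neg at hcon
  set t := rmin N a k with ht
  set u := rmin N b k with hu
  have hSt : ∑ i ∈ S, a i = t := by rw [ht, rmin, hSsum]
  have hTu : ∑ i ∈ T, b i = u := by rw [hu, rmin, hTsum]
  -- t ≥ k * q
  have htq : k * q ≤ t := by
    rw [← hSt, ← hScard]
    calc S.card * q = ∑ _i ∈ S, q := by rw [Finset.sum_const, smul_eq_mul]
    _ ≤ ∑ i ∈ S, a i := Finset.sum_le_sum fun i _ => hge i
  -- m ≤ t + (N - k) * (q + 1)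
  have hcompl : ∀ s : Finset (Fin N), s.card = k →
      (∑ i ∈ sᶜ, a i) ≤ (N - k) * (q + 1) := by
    intro s hs
    calc ∑ i ∈ sᶜ, a i ≤ ∑ _i ∈ sᶜ, (q + 1) := Finset.sum_le_sum fun i _ => hle i
    _ = (N - k) * (q + 1) := by
        rw [Finset.sum_const, smul_eq_mul, Finset.card_compl, hs, Fintype.card_fin]
  have hma : m ≤ t + (N - k) * (q + 1) := by
    have h1 := hcompl S hScard
    have h2 : (∑ i ∈ S, a i) + ∑ i ∈ Sᶜ, a i = m := by
      rw [Finset.sum_add_sum_compl, ha]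
    omega
  -- every entry of b outside T is ≥ q + 1
  have hbig : ∃ i ∈ T, q + 1 ≤ b i := by
    by_contra h
    push_neg at h
    have : (∑ i ∈ T, b i) ≤ k * q := by
      calc ∑ i ∈ T, b i ≤ ∑ _i ∈ T, q := Finset.sum_le_sum fun i hi => by
            have := h i hi; omega
      _ = k * q := by rw [Finset.sum_const, smul_eq_mul, hTcard]
    omega
  obtain ⟨i0, hi0T, hi0⟩ := hbig
  have houtside : ∀ j, j ∉ T → q + 1 ≤ b j := by
    intro j hjT
    by_contra hj
    push_neg at hj
    set T' := insert j (T.erase i0) with hT'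
    have hjne : j ∉ T.erase i0 := fun h => hjT (Finset.mem_of_mem_erase h)
    have hT'card : T'.card = k := by
      rw [hT', Finset.card_insert_of_notMem hjne, Finset.card_erase_of_mem hi0T, hTcard]
      omega
    have hsum1 : (∑ i ∈ T.erase i0, b i) + b i0 = u := by
      rw [← hTu]; exact Finset.sum_erase_add T b hi0T
    have hsum2 : (∑ i ∈ T', b i) = (∑ i ∈ T.erase i0, b i) + b j := by
      rw [hT', Finset.sum_insert hjne]; ring
    have hT'le : u ≤ ∑ i ∈ T', b i := by
      rw [hu, rmin]
      exact Nat.sInf_le ⟨T', hT'card, rfl⟩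
    omega
  have hTcompl : (N - k) * (q + 1) ≤ ∑ i ∈ Tᶜ, b i := by
    calc (N - k) * (q + 1) = ∑ _i ∈ Tᶜ, (q + 1) := by
          rw [Finset.sum_const, smul_eq_mul, Finset.card_compl, hTcard, Fintype.card_fin]
    _ ≤ ∑ i ∈ Tᶜ, b i := Finset.sum_le_sum fun i hi =>
          houtside i (Finset.mem_compl.mp hi)
  have hsplit : (∑ i ∈ T, b i) + ∑ i ∈ Tᶜ, b i = m := by
    rw [Finset.sum_add_sum_compl, hb]
  omega
end

section
/- Let N ≥ 2, m ≥ 0, and let a = (a_1,…,a_N) be an N-tuple of nonnegative integers summing to m with max_j a_j − min_j a_j ≥ 2. Then a is not maximal for the partial order on N-tuples given by comparing all the functions r_k: there exists an N-tuple b of nonnegative integers summing to m with r_k(a) ≤ r_k(b) for all 1 ≤ k ≤ N and r_k(a) < r_k(b) for some k. -/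
lemma rmin_le {N : ℕ} (c : Fin N → ℕ) (s : Finset (Fin N)) :
    rmin N c s.card ≤ ∑ i ∈ s, c i :=
  Nat.sInf_le ⟨s, rfl, rfl⟩

lemma rmin_attained {N k : ℕ} (c : Fin N → ℕ) (hk : k ≤ N) :
    ∃ s : Finset (Fin N), s.card = k ∧ ∑ i ∈ s, c i = rmin N c k := by
  have hne : {x | ∃ s : Finset (Fin N), s.card = k ∧ ∑ i ∈ s, c i = x}.Nonempty := by
    obtain ⟨s, _, hs⟩ := Finset.exists_subset_card_eq (s := (Finset.univ : Finset (Fin N))) (n := k)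
      (by simpa using hk)
    exact ⟨_, s, hs, rfl⟩
  exact Nat.sInf_mem hne

/-- A tuple with two entries differing by at least `2` is not maximal for the order
given by comparing all the `r_k`. -/
theorem stmt_3 (N m : ℕ) (hN : 2 ≤ N) (a : Fin N → ℕ)
    (ha : ∑ i, a i = m) (hbig : ∃ i j, a j + 2 ≤ a i) :
    ∃ b : Fin N → ℕ, (∑ i, b i = m) ∧
      (∀ k, 1 ≤ k → k ≤ N → rmin N a k ≤ rmin N b k) ∧
      (∃ k, 1 ≤ k ∧ k ≤ N ∧ rmin N a k < rmin N b k) := by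
  classical
  -- pick i maximizing a and j minimizing a
  obtain ⟨i, _, hmax⟩ := Finset.exists_max_image (Finset.univ : Finset (Fin N)) a
    ⟨⟨0, by omega⟩, Finset.mem_univ _⟩
  obtain ⟨j, _, hmin⟩ := Finset.exists_min_image (Finset.univ : Finset (Fin N)) a
    ⟨⟨0, by omega⟩, Finset.mem_univ _⟩
  have hmax' : ∀ t, a t ≤ a i := fun t => hmax t (Finset.mem_univ t)
  have hmin' : ∀ t, a j ≤ a t := fun t => hmin t (Finset.mem_univ t)
  have hgap : a j + 2 ≤ a i := by
    obtain ⟨i0, j0, h0⟩ := hbig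
    have := hmax' i0
    have := hmin' j0
    omega
  have hij : i ≠ j := by intro h; rw [h] at hgap; omega
  set b : Fin N → ℕ := Function.update (Function.update a i (a i - 1)) j (a j + 1) with hb
  have hbi : b i = a i - 1 := by
    simp [hb, Function.update_of_ne hij, Function.update_self]
  have hbj : b j = a j + 1 := by simp [hb]
  have hbt : ∀ t, t ≠ i → t ≠ j → b t = a t := by
    intro t hti htj
    simp [hb, Function.update_of_ne htj, Function.update_of_ne hti]
  -- sums over sets containing both i and j agree
  have hsum : ∀ s : Finset (Fin N), i ∈ s → j ∈ s →
      ∑ t ∈ s, b t = ∑ t ∈ s, a t := by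
    intro s hi hj
    have hj' : j ∈ s.erase i := Finset.mem_erase.mpr ⟨fun h => hij h.symm, hj⟩
    have hR : ∑ t ∈ (s.erase i).erase j, b t = ∑ t ∈ (s.erase i).erase j, a t :=
      Finset.sum_congr rfl (fun t ht => by
        have h1 := Finset.mem_erase.mp ht
        have h2 := Finset.mem_erase.mp h1.2
        exact hbt t h2.1 h1.1)
    have e1 : ∑ t ∈ s, b t = b i + (b j + ∑ t ∈ (s.erase i).erase j, b t) := by
      rw [← Finset.add_sum_erase s b hi, ← Finset.add_sum_erase (s.erase i) b hj']
    have e2 : ∑ t ∈ s, a t = a i + (a j + ∑ t ∈ (s.erase i).erase j, a t) := by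
      rw [← Finset.add_sum_erase s a hi, ← Finset.add_sum_erase (s.erase i) a hj']
    rw [e1, e2, hR, hbi, hbj]
    omega
  -- key comparison lemma: every sum of entries of b dominates rmin of a
  have key : ∀ s : Finset (Fin N), rmin N a s.card ≤ ∑ t ∈ s, b t := by
    intro s
    by_cases hi : i ∈ s <;> by_cases hj : j ∈ s
    · rw [hsum s hi hj]; exact rmin_le a s
    · -- i ∈ s, j ∉ s : swap i for j
      set s' : Finset (Fin N) := insert j (s.erase i) with hs'
      have hjni : j ∉ s.erase i := fun h => hj (Finset.mem_of_mem_erase h)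
      have hcard : s'.card = s.card := by
        rw [hs', Finset.card_insert_of_notMem hjni, Finset.card_erase_of_mem hi]
        have : 1 ≤ s.card := Finset.card_pos.mpr ⟨i, hi⟩
        omega
      have hR : ∑ t ∈ s.erase i, b t = ∑ t ∈ s.erase i, a t :=
        Finset.sum_congr rfl (fun t ht => by
          have h1 := Finset.mem_erase.mp ht
          exact hbt t h1.1 (fun h => hj (h ▸ h1.2)))
      have e1 : ∑ t ∈ s, b t = (a i - 1) + ∑ t ∈ s.erase i, a t := by
        rw [← Finset.add_sum_erase s b hi, hbi, hR]
      have e2 : ∑ t ∈ s', a t = a j + ∑ t ∈ s.erase i, a t := by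
        rw [hs', Finset.sum_insert hjni]
      have h3 : rmin N a s.card ≤ ∑ t ∈ s', a t := by
        rw [← hcard]; exact rmin_le a s'
      omega
    · -- j ∈ s, i ∉ s
      have hR : ∑ t ∈ s.erase j, b t = ∑ t ∈ s.erase j, a t :=
        Finset.sum_congr rfl (fun t ht => by
          have h1 := Finset.mem_erase.mp ht
          exact hbt t (fun h => hi (h ▸ h1.2)) h1.1)
      have e1 : ∑ t ∈ s, b t = (a j + 1) + ∑ t ∈ s.erase j, a t := by
        rw [← Finset.add_sum_erase s b hj, hbj, hR]
      have e2 : ∑ t ∈ s, a t = a j + ∑ t ∈ s.erase j, a t := by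
        rw [← Finset.add_sum_erase s a hj]
      have h3 := rmin_le a s
      omega
    · have : ∑ t ∈ s, b t = ∑ t ∈ s, a t :=
        Finset.sum_congr rfl (fun t ht =>
          hbt t (fun h => hi (h ▸ ht)) (fun h => hj (h ▸ ht)))
      rw [this]; exact rmin_le a s
  refine ⟨b, ?_, ?_, ?_⟩
  · rw [hsum Finset.univ (Finset.mem_univ i) (Finset.mem_univ j), ha]
  · intro k hk1 hkN
    obtain ⟨s, hsc, hse⟩ := rmin_attained b hkN
    calc rmin N a k = rmin N a s.card := by rw [hsc]
      _ ≤ ∑ t ∈ s, b t := key s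
      _ = rmin N b k := hse
  · -- strict inequality at k0 = number of minimal entries
    set μ := a j with hμ
    set M : Finset (Fin N) := Finset.univ.filter (fun t => a t = μ) with hM
    set k0 := M.card with hk0
    have hjM : j ∈ M := by simp [hM, hμ]
    have hk01 : 1 ≤ k0 := Finset.card_pos.mpr ⟨j, hjM⟩
    have hk0N : k0 ≤ N := by
      have := Finset.card_filter_le (Finset.univ : Finset (Fin N)) (fun t => a t = μ)
      simpa using this
    have hMsum : ∑ t ∈ M, a t = k0 * μ := by
      calc ∑ t ∈ M, a t = ∑ _t ∈ M, μ :=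
            Finset.sum_congr rfl (fun t ht => (Finset.mem_filter.mp ht).2)
        _ = k0 * μ := by rw [Finset.sum_const, smul_eq_mul]
    have hub : rmin N a k0 ≤ k0 * μ := by
      have := rmin_le a M
      rw [hMsum] at this
      exact this
    have hbge : ∀ t, μ ≤ b t := by
      intro t
      by_cases hti : t = i
      · rw [hti, hbi]; omega
      · by_cases htj : t = j
        · rw [htj, hbj]; omega
        · rw [hbt t hti htj]; exact hmin' t
    refine ⟨k0, hk01, hk0N, ?_⟩
    obtain ⟨s, hsc, hse⟩ := rmin_attained b hk0N
    have hstrict : k0 * μ < ∑ t ∈ s, b t := by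
      have hnotall : ¬ ∀ t ∈ s, b t = μ := by
        intro hall
        have hsub : s ⊆ M.erase j := by
          intro t ht
          have hbtμ := hall t ht
          have hti : t ≠ i := by
            intro h; rw [h, hbi] at hbtμ; omega
          have htj : t ≠ j := by
            intro h; rw [h, hbj] at hbtμ; omega
          rw [hbt t hti htj] at hbtμ
          exact Finset.mem_erase.mpr ⟨htj, Finset.mem_filter.mpr ⟨Finset.mem_univ t, hbtμ⟩⟩
        have := Finset.card_le_card hsub
        rw [hsc, Finset.card_erase_of_mem hjM] at this
        omega
      push_neg at hnotall
      obtain ⟨t, ht, htne⟩ := hnotall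
      have hlt : μ < b t := lt_of_le_of_ne (hbge t) (Ne.symm htne)
      calc k0 * μ = ∑ _t ∈ s, μ := by rw [Finset.sum_const, smul_eq_mul, hsc]
        _ < ∑ t ∈ s, b t := Finset.sum_lt_sum (fun u _ => hbge u) ⟨t, ht, hlt⟩
    omega
end
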